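/- arXiv:2210.17006 — 4 statements merged into one kernel-verified Lean document; each statement's English description precedes it below -/
import Mathlib

section
/- Let m ≥ 1 be an integer and let H be any graph on m vertices. Then the join G = H + K̄_{m+1} is m/(m+1)-tough; that is, writing n = 2m+1 for the order of G, the graph G is (n−1)/(n+1)-tough. -/
open SimpleGraph

/-- The number of connected components of `G − S`, the subgraph of `G` induced on the
complement of the vertex set `S`. -/
noncomputable def numComp {V : Type*} (G : SimpleGraph V) (S : Set V) : ℕ :=
  Nat.card (G.induce Sᶜ).ConnectedComponent

/-- A graph `G` is `t`-tough if `|S| ≥ t · c(G − S)` for every vertex set `S` whose removal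
leaves at least two components. -/
def Tough {V : Type*} [Fintype V] (t : ℝ) (G : SimpleGraph V) : Prop :=
  ∀ S : Finset V, 2 ≤ numComp G (S : Set V) →
    t * (numComp G (S : Set V) : ℝ) ≤ (S.card : ℝ)

/-- The join `G₁ + G₂` of two graphs: the disjoint union of `G₁` and `G₂` together with all
edges between the two vertex sets. -/
def graphJoin {α β : Type*} (G₁ : SimpleGraph α) (G₂ : SimpleGraph β) :
    SimpleGraph (α ⊕ β) :=
  SimpleGraph.fromRel (fun x y =>
    (∃ a b, x = Sum.inl a ∧ y = Sum.inl b ∧ G₁.Adj a b) ∨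
    (∃ a b, x = Sum.inr a ∧ y = Sum.inr b ∧ G₂.Adj a b) ∨
    (∃ a b, x = Sum.inl a ∧ y = Sum.inr b))

lemma join_adj_lr {α β : Type*} (G₁ : SimpleGraph α) (G₂ : SimpleGraph β) (a : α) (b : β) :
    (graphJoin G₁ G₂).Adj (Sum.inl a) (Sum.inr b) := by
  rw [graphJoin, SimpleGraph.fromRel_adj]
  exact ⟨by simp, Or.inl (Or.inr (Or.inr ⟨a, b, rfl, rfl⟩))⟩

lemma numComp_le {V : Type*} [Finite V] (G : SimpleGraph V) (S : Set V) :
    numComp G S ≤ Nat.card ↥Sᶜ := by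
  exact Nat.card_le_card_of_surjective (G.induce Sᶜ).connectedComponentMk
    (fun c => Quot.exists_rep c)

lemma join_preconnected {α β : Type*} (G₁ : SimpleGraph α) (G₂ : SimpleGraph β)
    (s : Set (α ⊕ β)) (a : α) (ha : Sum.inl a ∈ s) (b : β) (hb : Sum.inr b ∈ s) :
    ((graphJoin G₁ G₂).induce s).Preconnected := by
  have key : ∀ x : s, ∀ a' : α, (h : Sum.inl a' ∈ s) →
      ((graphJoin G₁ G₂).induce s).Reachable x ⟨Sum.inl a', h⟩ := by
    rintro ⟨(a₁ | b₁), hx⟩ a' h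
    · have h1 : ((graphJoin G₁ G₂).induce s).Adj ⟨Sum.inl a₁, hx⟩ ⟨Sum.inr b, hb⟩ :=
        join_adj_lr G₁ G₂ a₁ b
      have h2 : ((graphJoin G₁ G₂).induce s).Adj ⟨Sum.inr b, hb⟩ ⟨Sum.inl a', h⟩ :=
        (join_adj_lr G₁ G₂ a' b).symm
      exact h1.reachable.trans h2.reachable
    · exact SimpleGraph.Adj.reachable ((join_adj_lr G₁ G₂ a' b₁).symm)
  intro x y
  rcases y with ⟨(a₂ | b₂), hy⟩
  · exact key x a₂ hy
  · exact (key x a ha).trans (key ⟨Sum.inr b₂, hy⟩ a ha).symm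

/-- For any graph `H` on `m ≥ 1` vertices, the join `H + K̄_{m+1}` is `m/(m+1)`-tough,
i.e. `(n−1)/(n+1)`-tough where `n = 2m+1` is its order. -/
theorem stmt7 {α : Type*} [Fintype α] (m : ℕ) (hm : 1 ≤ m)
    (hcard : Fintype.card α = m) (H : SimpleGraph α) :
    Tough ((m : ℝ) / ((m : ℝ) + 1)) (graphJoin H (⊥ : SimpleGraph (Fin (m + 1)))) := by
  classical
  intro S hS
  set G := graphJoin H (⊥ : SimpleGraph (Fin (m + 1))) with hG
  set c := numComp G (S : Set (α ⊕ Fin (m + 1))) with hcdef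
  rw [div_mul_eq_mul_div, div_le_iff₀ (by positivity)]
  by_cases hA : ∀ a : α, Sum.inl a ∈ S
  · -- all left vertices are removed
    have hsub : ((S : Set (α ⊕ Fin (m + 1))))ᶜ ⊆
        Set.range (Sum.inr : Fin (m + 1) → α ⊕ Fin (m + 1)) := by
      rintro (a | b) hx
      · exact absurd (hA a) hx
      · exact ⟨b, rfl⟩
    have hc1 : c ≤ m + 1 := by
      refine (numComp_le _ _).trans ?_
      calc Nat.card ↥((S : Set (α ⊕ Fin (m + 1))))ᶜ
          ≤ Nat.card ↥(Set.range (Sum.inr : Fin (m + 1) → α ⊕ Fin (m + 1))) :=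
            Nat.card_mono (Set.toFinite _) hsub
        _ = m + 1 := by
            rw [Nat.card_range_of_injective Sum.inr_injective]
            simp [Nat.card_eq_fintype_card]
    have hS1 : m ≤ S.card := by
      have hsub2 : (Finset.univ.map ⟨Sum.inl, Sum.inl_injective⟩ :
          Finset (α ⊕ Fin (m + 1))) ⊆ S := by
        intro x hx
        simp only [Finset.mem_map, Finset.mem_univ, Function.Embedding.coeFn_mk,
          true_and] at hx
        obtain ⟨a, rfl⟩ := hx
        exact hA a
      have h := Finset.card_le_card hsub2
      simpa [hcard] using h
    have h1 : (c : ℝ) ≤ (m : ℝ) + 1 := by exact_mod_cast hc1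
    have h2 : (m : ℝ) ≤ (S.card : ℝ) := by exact_mod_cast hS1
    nlinarith [Nat.cast_nonneg (α := ℝ) m, Nat.cast_nonneg (α := ℝ) c]
  · push_neg at hA
    obtain ⟨a, ha⟩ := hA
    by_cases hB : ∀ b : Fin (m + 1), Sum.inr b ∈ S
    · -- all right vertices are removed
      have hsub : ((S : Set (α ⊕ Fin (m + 1))))ᶜ ⊆
          Set.range (Sum.inl : α → α ⊕ Fin (m + 1)) := by
        rintro (a' | b) hx
        · exact ⟨a', rfl⟩
        · exact absurd (hB b) hx
      have hc1 : c ≤ m := by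
        refine (numComp_le _ _).trans ?_
        calc Nat.card ↥((S : Set (α ⊕ Fin (m + 1))))ᶜ
            ≤ Nat.card ↥(Set.range (Sum.inl : α → α ⊕ Fin (m + 1))) :=
              Nat.card_mono (Set.toFinite _) hsub
          _ = m := by
              rw [Nat.card_range_of_injective Sum.inl_injective,
                Nat.card_eq_fintype_card, hcard]
      have hS1 : m + 1 ≤ S.card := by
        have hsub2 : (Finset.univ.map ⟨Sum.inr, Sum.inr_injective⟩ :
            Finset (α ⊕ Fin (m + 1))) ⊆ S := by
          intro x hx
          simp only [Finset.mem_map, Finset.mem_univ, Function.Embedding.coeFn_mk,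
            true_and] at hx
          obtain ⟨b, rfl⟩ := hx
          exact hB b
        have h := Finset.card_le_card hsub2
        simpa using h
      have h1 : (c : ℝ) ≤ (m : ℝ) := by exact_mod_cast hc1
      have h2 : (m : ℝ) + 1 ≤ (S.card : ℝ) := by exact_mod_cast hS1
      nlinarith [Nat.cast_nonneg (α := ℝ) m, Nat.cast_nonneg (α := ℝ) c]
    · -- both sides have surviving vertices: G − S is connected, contradiction
      exfalso
      push_neg at hB
      obtain ⟨b, hb⟩ := hB
      have hpre := join_preconnected H (⊥ : SimpleGraph (Fin (m + 1)))
        ((S : Set (α ⊕ Fin (m + 1))))ᶜ a ha b hb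
      have hsub : Subsingleton (G.induce ((S : Set (α ⊕ Fin (m + 1))))ᶜ).ConnectedComponent := by
        constructor
        intro x y
        refine SimpleGraph.ConnectedComponent.ind₂ (fun u v => ?_) x y
        exact SimpleGraph.ConnectedComponent.sound (hpre u v)
      have : c ≤ 1 := by
        rw [hcdef, numComp, Nat.card_eq_one_iff_unique.mpr ⟨hsub,
          ⟨(G.induce ((S : Set (α ⊕ Fin (m + 1))))ᶜ).connectedComponentMk ⟨Sum.inl a, ha⟩⟩⟩]
      omega
end

section
/- For every odd integer n ≥ 3 there exists a graph G on n vertices and a real number t > 0, namely t = (n−1)/(n+1) with G = K_{(n−1)/2,(n+1)/2}, such that G is t-tough, σ₂(G) = 2n/(t+1) − 2, and G is not hamiltonian. Hence the bound σ₂(G) > 2n/(t+1) − 2 for hamiltonicity of t-tough graphs is best possible. -/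
open SimpleGraph

section Aux
variable {α β : Type*}

private def col : α ⊕ β → ZMod 2 := Sum.elim 0 1

lemma cbp_col_adj {u v : α ⊕ β} (h : (completeBipartiteGraph α β).Adj u v) :
    col v = col u + 1 := by
  rcases u with a | a <;> rcases v with b | b <;>
    simp_all [col, completeBipartiteGraph] <;> decide

lemma cbp_walk_parity {u v : α ⊕ β} (w : (completeBipartiteGraph α β).Walk u v) :
    (w.length : ZMod 2) = col u + col v := by
  induction w with
  | nil =>
    have : ∀ x : ZMod 2, x + x = 0 := by decide
    simp [this]
  | cons h p ih =>
    have h2 : (2 : ZMod 2) = 0 := by decide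
    rw [Walk.length_cons, Nat.cast_add, Nat.cast_one, ih, cbp_col_adj h]
    ring_nf
    rw [h2, zero_add]

lemma cbp_not_ham [Fintype α] [Fintype β] [DecidableEq α] [DecidableEq β]
    (h : Odd (Fintype.card (α ⊕ β))) (h1 : Fintype.card (α ⊕ β) ≠ 1) :
    ¬ (completeBipartiteGraph α β).IsHamiltonian := by
  intro hH
  obtain ⟨a, p, hp⟩ := hH h1
  have hl := hp.length_eq
  have hpar := cbp_walk_parity p
  rw [hl] at hpar
  have hx : ∀ x : ZMod 2, x + x = 0 := by decide
  rw [hx] at hpar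
  rw [ZMod.natCast_eq_zero_iff] at hpar
  rw [Nat.odd_iff] at h
  omega

lemma cbp_induce_conn (S : Set (α ⊕ β)) {x : α} {y : β}
    (hx : Sum.inl x ∈ Sᶜ) (hy : Sum.inr y ∈ Sᶜ) :
    ((completeBipartiteGraph α β).induce Sᶜ).Connected := by
  rw [connected_iff]
  refine ⟨fun z w => ?_, ⟨⟨_, hx⟩⟩⟩
  obtain ⟨z, hz⟩ := z; obtain ⟨w, hw⟩ := w
  have adjlr : ∀ (a : α) (b : β) (ha : Sum.inl a ∈ Sᶜ) (hb : Sum.inr b ∈ Sᶜ),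
      ((completeBipartiteGraph α β).induce Sᶜ).Adj ⟨Sum.inl a, ha⟩ ⟨Sum.inr b, hb⟩ := by
    intro a b ha hb
    simp [completeBipartiteGraph]
  rcases z with z | z <;> rcases w with w | w
  · exact ((adjlr z y hz hy).reachable).trans ((adjlr w y hw hy).reachable).symm
  · exact (adjlr z w hz hw).reachable
  · exact ((adjlr w z hw hz).reachable).symm
  · exact (((adjlr x z hx hz).reachable).symm).trans ((adjlr x w hx hw).reachable)

lemma numComp_le_card (G : SimpleGraph (α ⊕ β)) [Finite α] [Finite β] (S : Set (α ⊕ β)) :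
    numComp G S ≤ Nat.card (Sᶜ : Set (α ⊕ β)) :=
  Nat.card_le_card_of_surjective _ (Quot.mk_surjective)

lemma numComp_eq_one (G : SimpleGraph (α ⊕ β)) (S : Set (α ⊕ β))
    (h : (G.induce Sᶜ).Connected) : numComp G S = 1 := by
  have hs : Subsingleton (G.induce Sᶜ).ConnectedComponent :=
    ⟨fun c d => c.ind fun u => d.ind fun v => ConnectedComponent.sound (h.preconnected u v)⟩
  have hne : Nonempty (G.induce Sᶜ).ConnectedComponent := by
    obtain ⟨v⟩ := h.nonempty
    exact ⟨(G.induce Sᶜ).connectedComponentMk v⟩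
  exact Nat.card_eq_one_iff_unique.mpr ⟨hs, hne⟩

lemma cbp_nbhd_inl (x : α) :
    (completeBipartiteGraph α β).neighborSet (Sum.inl x) = Set.range Sum.inr := by
  ext w; rcases w with w | w <;> simp [completeBipartiteGraph, neighborSet]

lemma cbp_nbhd_inr (y : β) :
    (completeBipartiteGraph α β).neighborSet (Sum.inr y) = Set.range Sum.inl := by
  ext w; rcases w with w | w <;> simp [completeBipartiteGraph, neighborSet]

end Aux

theorem stmt9' (m : ℕ) (hm : 1 ≤ m) :
    Tough (((2*m+1 : ℝ) - 1) / ((2*m+1 : ℝ) + 1))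
        (completeBipartiteGraph (Fin m) (Fin (m+1))) ∧
    (∀ u v : Fin m ⊕ Fin (m+1), u ≠ v →
        ¬ (completeBipartiteGraph (Fin m) (Fin (m+1))).Adj u v →
        2 * (2*m+1 : ℝ) / ((((2*m+1 : ℝ) - 1) / ((2*m+1 : ℝ) + 1)) + 1) - 2 ≤
          ((Nat.card ((completeBipartiteGraph (Fin m) (Fin (m+1))).neighborSet u) +
            Nat.card ((completeBipartiteGraph (Fin m) (Fin (m+1))).neighborSet v) : ℕ) : ℝ)) ∧
    (∃ u v : Fin m ⊕ Fin (m+1), u ≠ v ∧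
        ¬ (completeBipartiteGraph (Fin m) (Fin (m+1))).Adj u v ∧
        ((Nat.card ((completeBipartiteGraph (Fin m) (Fin (m+1))).neighborSet u) +
            Nat.card ((completeBipartiteGraph (Fin m) (Fin (m+1))).neighborSet v) : ℕ) : ℝ) =
          2 * (2*m+1 : ℝ) / ((((2*m+1 : ℝ) - 1) / ((2*m+1 : ℝ) + 1)) + 1) - 2) ∧
    ¬ (completeBipartiteGraph (Fin m) (Fin (m+1))).IsHamiltonian := by
  have hmR : (1 : ℝ) ≤ (m : ℝ) := by exact_mod_cast hm
  -- degree computations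
  have hdl : ∀ x : Fin m, Nat.card ((completeBipartiteGraph (Fin m) (Fin (m+1))).neighborSet
      (Sum.inl x)) = m + 1 := by
    intro x
    rw [cbp_nbhd_inl, Nat.card_range_of_injective Sum.inr_injective, Nat.card_eq_fintype_card,
      Fintype.card_fin]
  have hdr : ∀ y : Fin (m+1), Nat.card ((completeBipartiteGraph (Fin m) (Fin (m+1))).neighborSet
      (Sum.inr y)) = m := by
    intro y
    rw [cbp_nbhd_inr, Nat.card_range_of_injective Sum.inl_injective, Nat.card_eq_fintype_card,
      Fintype.card_fin]
  -- RHS computation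
  have hden : ((2*m+1 : ℝ) - 1) / ((2*m+1 : ℝ) + 1) + 1 = (2*(2*m+1 : ℝ))/((2*m+1 : ℝ)+1) := by
    field_simp
    ring
  have hdenne : ((2*m+1 : ℝ) - 1) / ((2*m+1 : ℝ) + 1) + 1 ≠ 0 := by
    rw [hden]; positivity
  have hrhs : 2 * (2*m+1 : ℝ) / ((((2*m+1 : ℝ) - 1) / ((2*m+1 : ℝ) + 1)) + 1) - 2 = 2*m := by
    have h0 : (2*(2*(m:ℝ)+1)) ≠ 0 := by positivity
    rw [hden, div_div_eq_mul_div, mul_comm, mul_div_assoc, div_self h0, mul_one]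
    ring
  refine ⟨?_, ?_, ?_, ?_⟩
  · -- Toughness
    intro S hS2
    by_cases hR : ∃ y : Fin (m+1), Sum.inr y ∈ ((S : Set (Fin m ⊕ Fin (m+1)))ᶜ)
    · by_cases hL : ∃ x : Fin m, Sum.inl x ∈ ((S : Set (Fin m ⊕ Fin (m+1)))ᶜ)
      · obtain ⟨y, hy⟩ := hR; obtain ⟨x, hx⟩ := hL
        rw [numComp_eq_one _ _ (cbp_induce_conn _ hx hy)] at hS2
        omega
      · -- Sᶜ ⊆ range inr
        push_neg at hL
        have hsub : ((S : Set (Fin m ⊕ Fin (m+1)))ᶜ) ⊆ Set.range Sum.inr := by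
          rintro (a | a) ha
          · exact absurd ha (hL a)
          · exact ⟨a, rfl⟩
        have hc1 : numComp (completeBipartiteGraph (Fin m) (Fin (m+1))) (S : Set _) ≤ m + 1 := by
          refine (numComp_le_card _ _).trans ?_
          calc Nat.card ((S : Set (Fin m ⊕ Fin (m+1)))ᶜ : Set _)
              ≤ Nat.card (Set.range (Sum.inr : Fin (m+1) → _)) :=
                Nat.card_mono (Set.toFinite _) hsub
            _ = m + 1 := by
                rw [Nat.card_range_of_injective Sum.inr_injective, Nat.card_eq_fintype_card,
                  Fintype.card_fin]
        have hScard : m ≤ S.card := by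
          have himg : (Finset.univ.image (Sum.inl : Fin m → Fin m ⊕ Fin (m+1))) ⊆ S := by
            intro v hv
            simp only [Finset.mem_image, Finset.mem_univ, true_and] at hv
            obtain ⟨a, rfl⟩ := hv
            by_contra hvS
            exact (hL a) (by simpa using hvS)
          have := Finset.card_le_card himg
          rwa [Finset.card_image_of_injective _ Sum.inl_injective, Finset.card_univ,
            Fintype.card_fin] at this
        have hc1R : (numComp (completeBipartiteGraph (Fin m) (Fin (m+1))) (S : Set _) : ℝ)
            ≤ (m : ℝ) + 1 := by exact_mod_cast hc1
        have hScardR : (m : ℝ) ≤ (S.card : ℝ) := by exact_mod_cast hScard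
        have ht : (0:ℝ) ≤ ((2*m+1 : ℝ) - 1) / ((2*m+1 : ℝ) + 1) := div_nonneg (by linarith) (by positivity)
        have key : ((2*m+1 : ℝ) - 1) / ((2*m+1 : ℝ) + 1) * ((m:ℝ)+1) = m := by
          field_simp
          ring
        calc ((2*m+1 : ℝ) - 1) / ((2*m+1 : ℝ) + 1)
              * (numComp (completeBipartiteGraph (Fin m) (Fin (m+1))) (S : Set _) : ℝ)
            ≤ ((2*m+1 : ℝ) - 1) / ((2*m+1 : ℝ) + 1) * ((m:ℝ)+1) :=
              mul_le_mul_of_nonneg_left hc1R ht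
          _ = (m : ℝ) := key
          _ ≤ (S.card : ℝ) := hScardR
    · -- Sᶜ ⊆ range inl
      push_neg at hR
      have hsub : ((S : Set (Fin m ⊕ Fin (m+1)))ᶜ) ⊆ Set.range Sum.inl := by
        rintro (a | a) ha
        · exact ⟨a, rfl⟩
        · exact absurd ha (hR a)
      have hc1 : numComp (completeBipartiteGraph (Fin m) (Fin (m+1))) (S : Set _) ≤ m := by
        refine (numComp_le_card _ _).trans ?_
        calc Nat.card ((S : Set (Fin m ⊕ Fin (m+1)))ᶜ : Set _)
            ≤ Nat.card (Set.range (Sum.inl : Fin m → _)) :=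
              Nat.card_mono (Set.toFinite _) hsub
          _ = m := by
              rw [Nat.card_range_of_injective Sum.inl_injective, Nat.card_eq_fintype_card,
                Fintype.card_fin]
      have hScard : m + 1 ≤ S.card := by
        have himg : (Finset.univ.image (Sum.inr : Fin (m+1) → Fin m ⊕ Fin (m+1))) ⊆ S := by
          intro v hv
          simp only [Finset.mem_image, Finset.mem_univ, true_and] at hv
          obtain ⟨a, rfl⟩ := hv
          by_contra hvS
          exact (hR a) (by simpa using hvS)
        have := Finset.card_le_card himg
        rwa [Finset.card_image_of_injective _ Sum.inr_injective, Finset.card_univ,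
          Fintype.card_fin] at this
      have hc1R : (numComp (completeBipartiteGraph (Fin m) (Fin (m+1))) (S : Set _) : ℝ)
          ≤ (m : ℝ) := by exact_mod_cast hc1
      have hScardR : (m : ℝ) + 1 ≤ (S.card : ℝ) := by exact_mod_cast hScard
      have ht : ((2*m+1 : ℝ) - 1) / ((2*m+1 : ℝ) + 1) ≤ 1 := by
        rw [div_le_one (by positivity)]
        linarith
      have ht0 : (0:ℝ) ≤ ((2*m+1 : ℝ) - 1) / ((2*m+1 : ℝ) + 1) := div_nonneg (by linarith) (by positivity)
      have hc0 : (0:ℝ) ≤ (numComp (completeBipartiteGraph (Fin m) (Fin (m+1))) (S : Set _) : ℝ) :=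
        Nat.cast_nonneg _
      nlinarith
  · -- σ₂ lower bound
    rintro (x | x) (y | y) hne hnadj
    · rw [hdl x, hdl y, hrhs]; push_cast; linarith
    · exact absurd (by simp [completeBipartiteGraph]) hnadj
    · exact absurd (by simp [completeBipartiteGraph]) hnadj
    · rw [hdr x, hdr y, hrhs]; push_cast; linarith
  · -- equality witness
    refine ⟨Sum.inr ⟨0, by omega⟩, Sum.inr ⟨1, by omega⟩, ?_, ?_, ?_⟩
    · simp [Fin.ext_iff]
    · simp [completeBipartiteGraph]
    · rw [hdr, hdr, hrhs]; push_cast; ring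
  · -- not hamiltonian
    apply cbp_not_ham
    · simp only [Fintype.card_sum, Fintype.card_fin]
      exact ⟨m, by ring⟩
    · simp only [Fintype.card_sum, Fintype.card_fin]
      omega

/-- **Sharpness of the Ore-type bound.** For every odd `n ≥ 3`, the complete bipartite
graph `G = K_{(n−1)/2,(n+1)/2}` together with `t = (n−1)/(n+1)` is `t`-tough, satisfies
`σ₂(G) = 2n/(t+1) − 2`, and is not hamiltonian. -/
theorem stmt9 (n : ℕ) (hn : 3 ≤ n) (hodd : Odd n) :
    Tough (((n : ℝ) - 1) / ((n : ℝ) + 1))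
        (completeBipartiteGraph (Fin ((n - 1) / 2)) (Fin ((n + 1) / 2))) ∧
    (∀ u v : Fin ((n - 1) / 2) ⊕ Fin ((n + 1) / 2), u ≠ v →
        ¬ (completeBipartiteGraph (Fin ((n - 1) / 2)) (Fin ((n + 1) / 2))).Adj u v →
        2 * (n : ℝ) / ((((n : ℝ) - 1) / ((n : ℝ) + 1)) + 1) - 2 ≤
          ((Nat.card ((completeBipartiteGraph (Fin ((n - 1) / 2)) (Fin ((n + 1) / 2))).neighborSet u) +
            Nat.card ((completeBipartiteGraph (Fin ((n - 1) / 2)) (Fin ((n + 1) / 2))).neighborSet v) : ℕ) : ℝ)) ∧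
    (∃ u v : Fin ((n - 1) / 2) ⊕ Fin ((n + 1) / 2), u ≠ v ∧
        ¬ (completeBipartiteGraph (Fin ((n - 1) / 2)) (Fin ((n + 1) / 2))).Adj u v ∧
        ((Nat.card ((completeBipartiteGraph (Fin ((n - 1) / 2)) (Fin ((n + 1) / 2))).neighborSet u) +
            Nat.card ((completeBipartiteGraph (Fin ((n - 1) / 2)) (Fin ((n + 1) / 2))).neighborSet v) : ℕ) : ℝ) =
          2 * (n : ℝ) / ((((n : ℝ) - 1) / ((n : ℝ) + 1)) + 1) - 2) ∧
    ¬ (completeBipartiteGraph (Fin ((n - 1) / 2)) (Fin ((n + 1) / 2))).IsHamiltonian := by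
  obtain ⟨m, hm⟩ := hodd
  have h1 : (n - 1) / 2 = m := by omega
  have h2 : (n + 1) / 2 = m + 1 := by omega
  have h3 : (n : ℝ) = 2 * m + 1 := by
    have : n = 2 * m + 1 := by omega
    rw [this]; push_cast; ring
  rw [h1, h2, h3]
  exact stmt9' m (by omega)
end

section
/- Let t > 0 be a real number and let G be a t-tough graph on n ≥ 3 vertices with σ₂(G) ≥ 2n/(t+1) − 2. If G is not 2-connected, then n = 3 and G is the path on 3 vertices (equivalently, G = K₁ + K̄₂). -/
open SimpleGraph

lemma two_le_card_cc {W : Type*} [Finite W] [Nonempty W] (H : SimpleGraph W)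
    (h : ¬ H.Connected) : 2 ≤ Nat.card H.ConnectedComponent := by
  by_contra hc
  push_neg at hc
  have hs : Subsingleton H.ConnectedComponent :=
    Finite.card_le_one_iff_subsingleton.mp (by omega)
  exact h ⟨fun a b => (SimpleGraph.ConnectedComponent.eq).mp (Subsingleton.elim _ _)⟩

/-- If `G` is a `t`-tough graph on `n ≥ 3` vertices with `σ₂(G) ≥ 2n/(t+1) − 2` that is
not `2`-connected, then `n = 3` and `G` is the path on three vertices. -/
theorem stmt10 {V : Type*} [Fintype V] (t : ℝ) (ht : 0 < t) (G : SimpleGraph V)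
    (hn : 3 ≤ Fintype.card V) (htough : Tough t G)
    (hsigma2 : ∀ u v : V, u ≠ v → ¬ G.Adj u v →
      2 * (Fintype.card V : ℝ) / (t + 1) - 2 ≤
        ((Nat.card (G.neighborSet u) + Nat.card (G.neighborSet v) : ℕ) : ℝ))
    (hnot2conn : ¬ (3 ≤ Fintype.card V ∧ ∀ v : V, (G.induce {v}ᶜ).Connected)) :
    Fintype.card V = 3 ∧ Nonempty (G ≃g pathGraph 3) := by
  classical
  -- obtain a cut vertex
  have hcut : ∃ v : V, ¬ (G.induce {v}ᶜ).Connected := by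
    by_contra h; push_neg at h; exact hnot2conn ⟨hn, h⟩
  obtain ⟨v, hv⟩ := hcut
  have hvc : Nonempty ↥({v}ᶜ : Set V) := by
    obtain ⟨x, hx⟩ := Fintype.exists_ne_of_one_lt_card (by omega) v
    exact ⟨⟨x, hx⟩⟩
  -- at least two components after removing v
  have hcc2 : 2 ≤ numComp G ({v} : Set V) := two_le_card_cc _ hv
  -- toughness applied to {v} : t ≤ 1/2
  have ht2 : t * 2 ≤ 1 := by
    have := htough {v} (by simpa using hcc2)
    simp only [Finset.coe_singleton, Finset.card_singleton, Nat.cast_one] at this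
    have h2 : (2 : ℝ) ≤ (numComp G ({v} : Set V) : ℝ) := by exact_mod_cast hcc2
    nlinarith
  -- two vertices in distinct components
  have hnt : Nontrivial (G.induce ({v}ᶜ : Set V)).ConnectedComponent :=
    Finite.one_lt_card_iff_nontrivial.mp (by
      have : 2 ≤ Nat.card (G.induce ({v}ᶜ : Set V)).ConnectedComponent := hcc2
      omega)
  obtain ⟨c₁, c₂, hc12⟩ := hnt
  obtain ⟨u', hu'⟩ := Quot.exists_rep c₁
  obtain ⟨w', hw'⟩ := Quot.exists_rep c₂
  have hcomp : (G.induce ({v}ᶜ : Set V)).connectedComponentMk u' ≠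
      (G.induce ({v}ᶜ : Set V)).connectedComponentMk w' := by
    rw [show (G.induce ({v}ᶜ : Set V)).connectedComponentMk u' = c₁ from hu',
        show (G.induce ({v}ᶜ : Set V)).connectedComponentMk w' = c₂ from hw']
    exact hc12
  set u : V := (u' : V) with hu_def
  set w : V := (w' : V) with hw_def
  have hu : u ≠ v := u'.2
  have hw : w ≠ v := w'.2
  have huw : u ≠ w := by
    intro h
    exact hcomp (by rw [Subtype.ext h])
  have hnadj : ¬ G.Adj u w := by
    intro h
    exact hcomp (SimpleGraph.ConnectedComponent.sound (SimpleGraph.Adj.reachable (by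
      simpa [SimpleGraph.comap_adj] using h)))
  -- degree bound
  have hinter : G.neighborFinset u ∩ G.neighborFinset w ⊆ {v} := by
    intro x hx
    simp only [Finset.mem_inter, SimpleGraph.mem_neighborFinset] at hx
    simp only [Finset.mem_singleton]
    by_contra hxv
    have hadj1 : (G.induce ({v}ᶜ : Set V)).Adj u' ⟨x, hxv⟩ := by
      simpa [SimpleGraph.comap_adj] using hx.1
    have hadj2 : (G.induce ({v}ᶜ : Set V)).Adj (⟨x, hxv⟩ : ↥({v}ᶜ : Set V)) w' := by
      simpa [SimpleGraph.comap_adj] using (hx.2).symm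
    exact hcomp (SimpleGraph.ConnectedComponent.sound
      (hadj1.reachable.trans hadj2.reachable))
  have hunion : G.neighborFinset u ∪ G.neighborFinset w ⊆ Finset.univ \ {u, w} := by
    intro x hx
    simp only [Finset.mem_union, SimpleGraph.mem_neighborFinset] at hx
    simp only [Finset.mem_sdiff, Finset.mem_univ, Finset.mem_insert, Finset.mem_singleton,
      true_and]
    push_neg
    constructor
    · rintro rfl
      rcases hx with h | h
      · exact G.irrefl h
      · exact hnadj h.symm
    · rintro rfl
      rcases hx with h | h
      · exact hnadj h
      · exact G.irrefl h
  have hdeg : (G.neighborFinset u).card + (G.neighborFinset w).card ≤ Fintype.card V - 1 := by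
    have h1 := Finset.card_le_card hunion
    have h2 := Finset.card_le_card hinter
    have h3 : (Finset.univ \ ({u, w} : Finset V)).card = Fintype.card V - 2 := by
      rw [Finset.card_sdiff_of_subset (Finset.subset_univ _), Finset.card_univ]
      congr 1
      rw [Finset.card_insert_of_notMem (by simpa using huw), Finset.card_singleton]
    have h4 := Finset.card_union_add_card_inter (G.neighborFinset u) (G.neighborFinset w)
    simp only [Finset.card_singleton] at h2
    omega
  -- Nat.card of neighborSet = neighborFinset card
  have hcard : ∀ x : V, Nat.card (G.neighborSet x) = (G.neighborFinset x).card := by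
    intro x
    rw [Nat.card_eq_fintype_card, SimpleGraph.card_neighborSet_eq_degree]
    rfl
  -- derive n = 3
  have hσ := hsigma2 u w huw hnadj
  rw [hcard u, hcard w] at hσ
  have hdegR : ((G.neighborFinset u).card + (G.neighborFinset w).card : ℝ) ≤
      (Fintype.card V : ℝ) - 1 := by
    have : ((G.neighborFinset u).card + (G.neighborFinset w).card : ℕ) ≤
        Fintype.card V - 1 := hdeg
    have h1 : (1 : ℕ) ≤ Fintype.card V := by omega
    push_cast [Nat.cast_sub h1] at this ⊢
    exact_mod_cast this
  have hnR : (3 : ℝ) ≤ (Fintype.card V : ℝ) := by exact_mod_cast hn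
  have ht1 : (0 : ℝ) < t + 1 := by linarith
  have hkey : 2 * (Fintype.card V : ℝ) ≤ ((Fintype.card V : ℝ) + 1) * (t + 1) := by
    have h5 : 2 * (Fintype.card V : ℝ) / (t + 1) ≤ (Fintype.card V : ℝ) + 1 := by
      push_cast at hσ
      linarith
    calc 2 * (Fintype.card V : ℝ) = 2 * (Fintype.card V : ℝ) / (t + 1) * (t + 1) := by
          field_simp
      _ ≤ ((Fintype.card V : ℝ) + 1) * (t + 1) := by
          apply mul_le_mul_of_nonneg_right h5 (le_of_lt ht1)
  have hn3 : Fintype.card V = 3 := by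
    have : (Fintype.card V : ℝ) ≤ 3 := by nlinarith
    have : Fintype.card V ≤ 3 := by exact_mod_cast this
    omega
  refine ⟨hn3, ?_⟩
  -- G is connected
  have hconn : G.Connected := by
    by_contra hnc
    have hneV : Nonempty V := Fintype.card_pos_iff.mp (by omega)
    have h2 : 2 ≤ Nat.card G.ConnectedComponent := two_le_card_cc _ hnc
    have hiso : numComp G ((∅ : Finset V) : Set V) = Nat.card G.ConnectedComponent := by
      unfold numComp
      apply Nat.card_congr
      have : (((∅ : Finset V) : Set V))ᶜ = Set.univ := by simp
      rw [this]
      exact (SimpleGraph.induceUnivIso G).connectedComponentEquiv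
    have := htough ∅ (by rw [hiso]; exact h2)
    rw [hiso] at this
    simp only [Finset.card_empty, Nat.cast_zero] at this
    have : (0 : ℝ) < t * (Nat.card G.ConnectedComponent : ℝ) := by
      apply mul_pos ht
      exact_mod_cast Nat.lt_of_lt_of_le (by norm_num) h2
    linarith
  -- G.Adj u v and G.Adj w v
  have hall : ∀ x : V, x = u ∨ x = v ∨ x = w := by
    have hcard3 : ({u, v, w} : Finset V).card = 3 := by
      rw [Finset.card_insert_of_notMem (by simp [hu, huw]),
        Finset.card_insert_of_notMem (by simpa using (hw.symm : v ≠ w)),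
        Finset.card_singleton]
    have huniv : ({u, v, w} : Finset V) = Finset.univ :=
      Finset.eq_univ_of_card _ (by rw [hcard3, hn3])
    intro x
    have : x ∈ ({u, v, w} : Finset V) := huniv ▸ Finset.mem_univ x
    simpa using this
  have adj_of_ne : ∀ x : V, x ≠ u → x ≠ w → u ≠ x → G.Adj u x := by
    intro x hxu hxw hux
    obtain ⟨p⟩ := hconn.preconnected u x
    have hnil : ¬ p.Nil := SimpleGraph.Walk.not_nil_of_ne hux
    have hadj : G.Adj u (p.getVert 1) := SimpleGraph.Walk.adj_snd hnil
    rcases hall (p.getVert 1) with h | h | h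
    · exact absurd (h ▸ hadj) (G.irrefl)
    · rcases hall x with rfl | rfl | rfl
      · exact absurd rfl hxu
      · exact h ▸ hadj
      · exact absurd rfl hxw
    · exact absurd (h ▸ hadj) hnadj
  have huv : G.Adj u v := adj_of_ne v hu.symm hw.symm hu
  have hwv : G.Adj w v := by
    have : ∀ x : V, x ≠ w → x ≠ u → w ≠ x → G.Adj w x := by
      intro x hxw hxu hwx
      obtain ⟨p⟩ := hconn.preconnected w x
      have hnil : ¬ p.Nil := SimpleGraph.Walk.not_nil_of_ne hwx
      have hadj : G.Adj w (p.getVert 1) := SimpleGraph.Walk.adj_snd hnil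
      rcases hall (p.getVert 1) with h | h | h
      · exact absurd (h ▸ hadj) (fun hh => hnadj hh.symm)
      · rcases hall x with rfl | rfl | rfl
        · exact absurd rfl hxu
        · exact h ▸ hadj
        · exact absurd rfl hxw
      · exact absurd (h ▸ hadj) (G.irrefl)
    exact this v hw.symm hu.symm hw
  -- build the isomorphism
  let f : V → Fin 3 := fun x => if x = u then 0 else if x = v then 1 else 2
  let g : Fin 3 → V := fun i => if i = 0 then u else if i = 1 then v else w
  have hfu : f u = 0 := if_pos rfl
  have hfv : f v = 1 := by
    simp [f, Ne.symm hu]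
  have hfw : f w = 2 := by
    simp [f, Ne.symm huw, hw]
  have hg0 : g 0 = u := rfl
  have hg1 : g 1 = v := rfl
  have hg2 : g 2 = w := rfl
  have hleft : Function.LeftInverse g f := by
    intro x
    rcases hall x with rfl | rfl | rfl
    · rw [hfu, hg0]
    · rw [hfv, hg1]
    · rw [hfw, hg2]
  have hright : Function.RightInverse g f := by
    intro i
    fin_cases i
    · show f (g 0) = 0; rw [hg0, hfu]
    · show f (g 1) = 1; rw [hg1, hfv]
    · show f (g 2) = 2; rw [hg2, hfw]
  have hnadj' : ¬ G.Adj w u := fun h => hnadj h.symm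
  refine ⟨⟨Equiv.mk f g hleft hright, ?_⟩⟩
  intro a b
  show (pathGraph 3).Adj (f a) (f b) ↔ G.Adj a b
  rcases hall a with rfl | rfl | rfl <;> rcases hall b with rfl | rfl | rfl <;>
    simp [hfu, hfv, hfw, SimpleGraph.pathGraph_adj, huv, huv.symm, hwv, hwv.symm,
      hnadj, hnadj', G.irrefl]
end

section
/- Let t > 0 be a real number and let G be a noncomplete t-tough graph on n ≥ 3 vertices that is not hamiltonian. Then n ≥ (t+1)(2t+1). -/
open SimpleGraph

section Aux

variable {V : Type*} {G : SimpleGraph V}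

lemma aux_two_le_numComp [Fintype V] {S : Set V} {x y : V} (hx : x ∈ Sᶜ) (hy : y ∈ Sᶜ)
    (h : ∀ q : G.Walk x y, ∃ z ∈ q.support, z ∈ S) : 2 ≤ numComp G S := by
  have hfin : Finite (G.induce Sᶜ).ConnectedComponent :=
    (Quotient.finite _ : Finite (Quotient (G.induce Sᶜ).reachableSetoid))
  rw [numComp, show (2 : ℕ) = 1 + 1 by norm_num, Nat.add_one_le_iff,
    Finite.one_lt_card_iff_nontrivial]
  refine ⟨(G.induce Sᶜ).connectedComponentMk ⟨x, hx⟩,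
    (G.induce Sᶜ).connectedComponentMk ⟨y, hy⟩, fun hc => ?_⟩
  obtain ⟨q⟩ := (SimpleGraph.ConnectedComponent.eq).1 hc
  obtain ⟨z, hz, hzS⟩ := h (q.map (SimpleGraph.Embedding.induce (G := G) Sᶜ).toHom)
  replace hz : z ∈ q.support.map (SimpleGraph.Embedding.induce (G := G) Sᶜ).toHom := by
    rw [← Walk.support_map]; exact hz
  obtain ⟨⟨z', hz'⟩, _, rfl⟩ := List.mem_map.1 hz
  exact hz' hzS

lemma aux_card_le_card_comp {A : Finset V} (hA : ∀ x ∈ A, ∀ y ∈ A, ¬ G.Adj x y) :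
    A.card ≤ Nat.card (G.induce (↑A : Set V)).ConnectedComponent := by
  classical
  have hinj : Function.Injective
      (fun x : (↑A : Set V) => (G.induce (↑A : Set V)).connectedComponentMk x) := by
    intro x y hxy
    obtain ⟨q⟩ := (SimpleGraph.ConnectedComponent.eq).1 hxy
    cases q with
    | nil => rfl
    | @cons _ b _ h q =>
      exact absurd (h : G.Adj x.1 b.1) (hA x.1 x.2 b.1 b.2)
  have := Nat.card_le_card_of_injective _ hinj
  have hcard : Nat.card (↑A : Set V) = A.card := by
    simp [Nat.card_eq_fintype_card]
  omega

variable {t : ℝ}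

lemma aux_tough_preconnected [Fintype V] (ht : 0 < t) (htough : Tough t G) :
    G.Preconnected := by
  intro x y
  by_contra hr
  have h2 : 2 ≤ numComp G ((∅ : Finset V) : Set V) :=
    aux_two_le_numComp (by simp) (by simp) (fun q => absurd ⟨q⟩ hr)
  have h1 := htough ∅ h2
  have h3 : t * 2 ≤ t * (numComp G ((∅ : Finset V) : Set V) : ℝ) :=
    mul_le_mul_of_nonneg_left (by exact_mod_cast h2) ht.le
  simp only [Finset.card_empty, Nat.cast_zero] at h1
  linarith

lemma aux_tough_exists_cycle [Fintype V] (ht : 1/2 < t) (htough : Tough t G)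
    (hn : 3 ≤ Fintype.card V) : ∃ (v : V) (p : G.Walk v v), p.IsCycle := by
  classical
  by_contra h
  push_neg at h
  have hac : G.IsAcyclic := fun v c hc => h v c hc
  have hne : Nonempty V := Fintype.card_pos_iff.1 (by omega)
  have htree : G.IsTree := ⟨⟨aux_tough_preconnected (by linarith) htough⟩, hac⟩
  have hdeg : ∀ v : V, 2 ≤ G.degree v := by
    intro v
    by_cases hu : ∀ x, x ≠ v → G.Adj v x
    · have : G.neighborFinset v = Finset.univ.erase v := by
        ext x
        simp only [mem_neighborFinset, Finset.mem_erase, Finset.mem_univ, and_true]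
        exact ⟨fun h => (G.ne_of_adj h).symm, fun h => hu x h⟩
      rw [degree, this, Finset.card_erase_of_mem (Finset.mem_univ v), Finset.card_univ]
      omega
    · push_neg at hu
      obtain ⟨x, hxv, hxa⟩ := hu
      have h2 : 2 ≤ numComp G ((G.neighborFinset v : Set V)) := by
        refine aux_two_le_numComp (x := v) (y := x) (by simp) (by simp [hxa]) (fun q => ?_)
        cases q with
        | nil => exact absurd rfl hxv.symm
        | @cons _ b _ hadj q' => exact ⟨b, by simp, by simp [hadj]⟩
      have h1 := htough (G.neighborFinset v) h2
      have h2' : t * 2 ≤ t * (numComp G ((G.neighborFinset v : Set V)) : ℝ) :=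
        mul_le_mul_of_nonneg_left (by exact_mod_cast h2) (by linarith)
      have h3 : (1 : ℝ) < (G.degree v : ℝ) := by
        rw [← card_neighborFinset_eq_degree]
        linarith
      exact_mod_cast Nat.lt_iff_add_one_le.1 (by exact_mod_cast h3)
  have hsum : ∑ _v : V, 2 ≤ ∑ v : V, G.degree v := Finset.sum_le_sum (fun v _ => hdeg v)
  rw [Finset.sum_const, smul_eq_mul, Finset.card_univ, sum_degrees_eq_twice_card_edges] at hsum
  have hce := htree.card_edgeFinset
  omega

lemma aux_exists_max_cycle [Fintype V] (hex : ∃ (v : V) (p : G.Walk v v), p.IsCycle) :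
    ∃ (v : V) (p : G.Walk v v), p.IsCycle ∧
      ∀ (u : V) (q : G.Walk u u), q.IsCycle → q.length ≤ p.length := by
  classical
  set L : Set ℕ := {k | ∃ (v : V) (p : G.Walk v v), p.IsCycle ∧ p.length = k} with hL
  have hLne : L.Nonempty := by
    obtain ⟨v, p, hp⟩ := hex
    exact ⟨p.length, v, p, hp, rfl⟩
  have hbdd : BddAbove L := by
    refine ⟨Fintype.card V, fun k hk => ?_⟩
    obtain ⟨v, p, hp, rfl⟩ := hk
    have h1 : p.support.tail.Nodup := hp.support_nodup
    have h2 : p.support.tail.length = p.length := by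
      have := p.length_support
      simp [List.length_tail, this]
    rw [← h2]
    exact h1.length_le_card
  obtain ⟨v, p, hp, hlen⟩ := Nat.sSup_mem hLne hbdd
  exact ⟨v, p, hp, fun u q hq => hlen ▸ le_csSup hbdd ⟨u, q, hq, rfl⟩⟩

lemma aux_exists_off_cycle [Fintype V] [DecidableEq V] (hnh : ¬ G.IsHamiltonian)
    {v : V} {p : G.Walk v v} (hp : p.IsCycle) : ∃ w, w ∉ p.support := by
  by_contra h
  push_neg at h
  have hv : v ∈ p.support.tail := by
    rw [← Walk.support_tail_of_not_nil p hp.not_nil]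
    exact p.tail.end_mem_support
  have hham : p.IsHamiltonianCycle := by
    rw [Walk.isHamiltonianCycle_iff_isCycle_and_support_count_tail_eq_one]
    refine ⟨hp, fun a => ?_⟩
    have hmem : a ∈ p.support.tail := by
      have := h a
      rw [p.support_eq_cons] at this
      rcases List.mem_cons.1 this with rfl | h'
      · exact hv
      · exact h'
    exact List.count_eq_one_of_mem hp.support_nodup hmem
  exact hnh (fun _ => ⟨v, p, hham⟩)

lemma aux_cycle_tail_getLast {v : V} {p : G.Walk v v}
    (hne : p.support.tail ≠ []) : p.support.tail.getLast hne = v := by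
  rw [List.getLast_tail]
  exact p.getLast_support

lemma aux_cycle_support_tail_ne_nil {v : V} {p : G.Walk v v} (hp : p.IsCycle) :
    p.support.tail ≠ [] := by
  intro hnil
  have hls := p.length_support
  rw [p.support_eq_cons, hnil] at hls
  simp only [List.length_cons, List.length_nil] at hls
  have := hp.three_le_length
  omega

lemma aux_cycle_dropLast_nodup {v : V} {p : G.Walk v v} (hp : p.IsCycle) :
    p.support.dropLast.Nodup := by
  have hne := aux_cycle_support_tail_ne_nil hp
  have hgl := aux_cycle_tail_getLast (p := p) hne
  have htl : p.support.tail = p.support.tail.dropLast ++ [v] := by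
    conv_lhs => rw [← List.dropLast_append_getLast hne]
    rw [hgl]
  have hnd : p.support.tail.Nodup := hp.support_nodup
  have hvd : v ∉ p.support.tail.dropLast := by
    rw [htl] at hnd
    have := List.disjoint_of_nodup_append hnd
    intro hv
    exact this hv (List.mem_singleton_self v)
  have hdl : p.support.dropLast = v :: p.support.tail.dropLast := by
    conv_lhs => rw [p.support_eq_cons]
    exact List.dropLast_cons_of_ne_nil hne
  rw [hdl]
  exact List.nodup_cons.2 ⟨hvd, (List.dropLast_sublist _).nodup hnd⟩

lemma aux_dart_eq_of_fst_eq {v : V} {p : G.Walk v v} (hp : p.IsCycle) {d₁ d₂ : G.Dart}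
    (h1 : d₁ ∈ p.darts) (h2 : d₂ ∈ p.darts) (h : d₁.fst = d₂.fst) : d₁ = d₂ := by
  have hnd : (p.darts.map (·.fst)).Nodup := by
    rw [p.map_fst_darts]; exact aux_cycle_dropLast_nodup hp
  exact List.inj_on_of_nodup_map hnd h1 h2 h

lemma aux_dart_eq_of_snd_eq {v : V} {p : G.Walk v v} (hp : p.IsCycle) {d₁ d₂ : G.Dart}
    (h1 : d₁ ∈ p.darts) (h2 : d₂ ∈ p.darts) (h : d₁.snd = d₂.snd) : d₁ = d₂ := by
  have hnd : (p.darts.map (·.snd)).Nodup := by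
    rw [p.map_snd_darts]; exact hp.support_nodup
  exact List.inj_on_of_nodup_map hnd h1 h2 h

lemma aux_length_rotate {u v : V} [DecidableEq V] (c : G.Walk v v) (h : u ∈ c.support) :
    (c.rotate u h).length = c.length := by
  rw [← Walk.length_darts, ← Walk.length_darts]
  exact (Walk.rotate_darts c u h).perm.length_eq

lemma aux_cycle_mem_support_tail {v y : V} {p : G.Walk v v} (hp : p.IsCycle) :
    y ∈ p.support ↔ y ∈ p.support.tail := by
  constructor
  · intro hy
    rw [p.support_eq_cons] at hy
    rcases List.mem_cons.1 hy with rfl | h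
    · have hne := aux_cycle_support_tail_ne_nil hp
      have hgl := aux_cycle_tail_getLast (p := p) hne
      have hm := List.getLast_mem hne
      rwa [hgl] at hm
    · exact h
  · intro hy
    rw [p.support_eq_cons]
    exact List.mem_cons_of_mem _ hy

lemma aux_mem_rotate_support [DecidableEq V] {v u y : V} {p : G.Walk v v} (hp : p.IsCycle)
    (hu : u ∈ p.support) : y ∈ (p.rotate u hu).support ↔ y ∈ p.support := by
  rw [aux_cycle_mem_support_tail (hp.rotate hu), aux_cycle_mem_support_tail hp]
  exact (Walk.support_rotate p u hu).perm.mem_iff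

lemma aux_rotate_decomp [DecidableEq V] {v u : V} {p : G.Walk v v} (hp : p.IsCycle)
    (hu : u ∈ p.support) :
    ∃ (x : V) (e : G.Adj u x) (q : G.Walk x u),
      p.rotate u hu = Walk.cons e q ∧ (⟨(u, x), e⟩ : G.Dart) ∈ p.darts := by
  obtain ⟨x, e, q, heq⟩ := Walk.not_nil_iff.1 (hp.rotate hu).not_nil
  refine ⟨x, e, q, heq, ?_⟩
  have hd : (⟨(u, x), e⟩ : G.Dart) ∈ (p.rotate u hu).darts := by
    rw [heq, Walk.darts_cons]
    exact List.mem_cons_self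
  exact (Walk.rotate_darts p u hu).perm.mem_iff.1 hd

lemma aux_walk_first_entry {a b : V} (q : G.Walk a b) (C : V → Prop) (ha : ¬ C a) (hb : C b) :
    ∃ (y z : V), G.Adj y z ∧ C z ∧
      ∃ r : G.Walk a y, ∀ s ∈ r.support, ¬ C s := by
  induction q with
  | nil => exact absurd hb ha
  | @cons a c b e q' ih =>
    by_cases hc : C c
    · exact ⟨a, c, e, hc, Walk.nil, by simpa using ha⟩
    · obtain ⟨y, z, hyz, hz, r, hr⟩ := ih hc hb
      refine ⟨y, z, hyz, hz, Walk.cons e r, fun s hs => ?_⟩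
      rw [Walk.support_cons] at hs
      rcases List.mem_cons.1 hs with rfl | hs
      · exact ha
      · exact hr s hs

lemma aux_surgery1 [DecidableEq V] {u x h h' : V}
    (e : G.Adj u x) (q : G.Walk x u) (hcyc : (Walk.cons e q).IsCycle)
    (eh : G.Adj u h) (eh' : G.Adj x h')
    (P : G.Walk h h') (hP : ∀ y ∈ P.support, y ∉ (Walk.cons e q).support) :
    ∃ c : G.Walk u u, c.IsCycle ∧ (Walk.cons e q).length < c.length := by
  set P' : G.Walk h h' := (P.toPath : G.Walk h h') with hP'def
  have hP' : ∀ y ∈ P'.support, y ∉ (Walk.cons e q).support :=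
    fun y hy => hP y (Walk.support_toPath_subset P hy)
  have hqnd : q.support.Nodup := by
    have := hcyc.support_nodup
    rwa [Walk.support_cons, List.tail_cons] at this
  set rest : G.Walk h u := P'.append (Walk.cons eh'.symm q) with hrest
  have hrsupp : rest.support = P'.support ++ q.support := by
    rw [hrest, Walk.support_append, Walk.support_cons, List.tail_cons]
  have hpath : rest.IsPath := by
    apply Walk.IsPath.mk'
    rw [hrsupp]
    refine List.Nodup.append P.toPath.2.support_nodup hqnd (fun y hy hy2 => ?_)
    exact hP' y hy (by rw [Walk.support_cons]; exact List.mem_cons_of_mem _ hy2)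
  refine ⟨Walk.cons eh rest, (Walk.cons_isCycle_iff rest eh).2 ⟨hpath, ?_⟩, ?_⟩
  · intro hmem
    have hedges : rest.edges = P'.edges ++ (s(h', x) :: q.edges) := by
      rw [hrest, Walk.edges_append, Walk.edges_cons]
    rw [hedges] at hmem
    rcases List.mem_append.1 hmem with hm | hm
    · exact hP' u (P'.fst_mem_support_of_mem_edges hm) ((Walk.cons e q).start_mem_support)
    · rcases List.mem_cons.1 hm with hm | hm
      · rcases Sym2.eq_iff.1 hm with ⟨h1, h2⟩ | ⟨h1, h2⟩
        · exact hP' u (h1 ▸ P'.end_mem_support) ((Walk.cons e q).start_mem_support)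
        · exact e.ne h1
      · refine hP' h (P'.start_mem_support) ?_
        rw [Walk.support_cons]
        exact List.mem_cons_of_mem _ (q.snd_mem_support_of_mem_edges hm)
  · have : rest.length = P'.length + (q.length + 1) := by
      rw [hrest, Walk.length_append, Walk.length_cons]
    simp only [Walk.length_cons, this]
    omega

lemma aux_surgery2 [DecidableEq V] {u₁ x₁ u₂ x₂ h₁ h₂ : V}
    (e₁ : G.Adj u₁ x₁) (q1 : G.Walk x₁ u₂) (e₂ : G.Adj u₂ x₂) (q3 : G.Walk x₂ u₁)
    (hcyc : (Walk.cons e₁ (q1.append (Walk.cons e₂ q3))).IsCycle)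
    (hx : G.Adj x₁ x₂) (eh₁ : G.Adj u₁ h₁) (eh₂ : G.Adj u₂ h₂)
    (P : G.Walk h₁ h₂)
    (hP : ∀ y ∈ P.support, y ∉ (Walk.cons e₁ (q1.append (Walk.cons e₂ q3))).support)
    (hne : u₁ ≠ u₂) :
    ∃ c : G.Walk u₁ u₁, c.IsCycle ∧
      (Walk.cons e₁ (q1.append (Walk.cons e₂ q3))).length < c.length := by
  set W := Walk.cons e₁ (q1.append (Walk.cons e₂ q3)) with hW
  have hq1W : ∀ y ∈ q1.support, y ∈ W.support := fun y hy => by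
    rw [hW, Walk.support_cons]
    exact List.mem_cons_of_mem _ (Walk.subset_support_append_left _ _ hy)
  have hq3W : ∀ y ∈ q3.support, y ∈ W.support := fun y hy => by
    rw [hW, Walk.support_cons]
    refine List.mem_cons_of_mem _ (Walk.subset_support_append_right _ _ ?_)
    rw [Walk.support_cons]
    exact List.mem_cons_of_mem _ hy
  have hq : (q1.support ++ q3.support).Nodup := by
    have := hcyc.support_nodup
    rwa [Walk.support_cons, List.tail_cons, Walk.support_append, Walk.support_cons,
      List.tail_cons] at this
  set P' : G.Walk h₁ h₂ := (P.toPath : G.Walk h₁ h₂) with hP'def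
  have hP' : ∀ y ∈ P'.support, y ∉ W.support :=
    fun y hy => hP y (Walk.support_toPath_subset P hy)
  set inner : G.Walk u₂ u₁ := q1.reverse.append (Walk.cons hx q3) with hinner
  have hisupp : inner.support = q1.support.reverse ++ q3.support := by
    rw [hinner, Walk.support_append, Walk.support_cons, List.tail_cons, Walk.support_reverse]
  set rest : G.Walk h₁ u₁ := P'.append (Walk.cons eh₂.symm inner) with hrest
  have hrsupp : rest.support = P'.support ++ inner.support := by
    rw [hrest, Walk.support_append, Walk.support_cons, List.tail_cons]
  have hinodup : inner.support.Nodup := by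
    rw [hisupp]
    exact (((List.reverse_perm q1.support).append_right q3.support).nodup_iff).2 hq
  have hpath : rest.IsPath := by
    apply Walk.IsPath.mk'
    rw [hrsupp]
    refine List.Nodup.append P.toPath.2.support_nodup hinodup (fun y hy hy2 => ?_)
    rw [hisupp] at hy2
    rcases List.mem_append.1 hy2 with hm | hm
    · exact hP' y hy (hq1W y (List.mem_reverse.1 hm))
    · exact hP' y hy (hq3W y hm)
  refine ⟨Walk.cons eh₁ rest, (Walk.cons_isCycle_iff rest eh₁).2 ⟨hpath, ?_⟩, ?_⟩
  · intro hmem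
    have hedges : rest.edges = P'.edges ++ (s(h₂, u₂) ::
        (q1.reverse.edges ++ (s(x₁, x₂) :: q3.edges))) := by
      rw [hrest, Walk.edges_append, Walk.edges_cons, hinner, Walk.edges_append, Walk.edges_cons]
    rw [hedges] at hmem
    rcases List.mem_append.1 hmem with hm | hm
    · exact hP' u₁ (P'.fst_mem_support_of_mem_edges hm) W.start_mem_support
    rcases List.mem_cons.1 hm with hm | hm
    · rcases Sym2.eq_iff.1 hm with ⟨ha, hb⟩ | ⟨ha, hb⟩
      · exact hP' u₁ (ha ▸ P'.end_mem_support) W.start_mem_support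
      · exact hne ha
    rcases List.mem_append.1 hm with hm | hm
    · rw [Walk.edges_reverse] at hm
      have := q1.snd_mem_support_of_mem_edges (List.mem_reverse.1 hm)
      exact hP' h₁ P'.start_mem_support (hq1W h₁ this)
    rcases List.mem_cons.1 hm with hm | hm
    · rcases Sym2.eq_iff.1 hm with ⟨ha, hb⟩ | ⟨ha, hb⟩
      · exact e₁.ne ha
      · exact hP' h₁ P'.start_mem_support (hb ▸ hq1W x₁ q1.start_mem_support)
    · have := q3.snd_mem_support_of_mem_edges hm
      exact hP' h₁ P'.start_mem_support (hq3W h₁ this)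
  · have h1 : rest.length = P'.length + (1 + (q1.length + (1 + q3.length))) := by
      rw [hrest, Walk.length_append, Walk.length_cons, hinner, Walk.length_append,
        Walk.length_cons, Walk.length_reverse]
      omega
    have h2 : W.length = 1 + (q1.length + (1 + q3.length)) := by
      rw [hW, Walk.length_cons, Walk.length_append, Walk.length_cons]
      omega
    simp only [Walk.length_cons, h1, h2]
    omega

end Aux

/-- A noncomplete `t`-tough graph on `n ≥ 3` vertices that is not hamiltonian satisfies
`n ≥ (t+1)(2t+1)`. -/
theorem stmt11 {V : Type*} [Fintype V] [DecidableEq V] (t : ℝ) (ht : 0 < t)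
    (G : SimpleGraph V) (hnc : G ≠ ⊤) (hn : 3 ≤ Fintype.card V) (htough : Tough t G)
    (hnh : ¬ G.IsHamiltonian) :
    (t + 1) * (2 * t + 1) ≤ (Fintype.card V : ℝ) := by
  classical
  by_cases htt : t ≤ 1/2
  · have h3 : ((3 : ℕ) : ℝ) ≤ (Fintype.card V : ℝ) := by exact_mod_cast hn
    push_cast at h3
    nlinarith
  push_neg at htt
  obtain ⟨v, p, hp, hmax⟩ := aux_exists_max_cycle (aux_tough_exists_cycle htt htough hn)
  obtain ⟨w, hw⟩ := aux_exists_off_cycle hnh hp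
  -- the component of w in G - C
  set H : Set V := {y | ∃ q : G.Walk w y, ∀ z ∈ q.support, z ∉ p.support} with hHdef
  have hwH : w ∈ H := ⟨Walk.nil, by
    intro z hz
    simp only [Walk.support_nil, List.mem_singleton] at hz
    exact hz ▸ hw⟩
  have hHC : ∀ y ∈ H, y ∉ p.support := by
    rintro y ⟨q, hq⟩
    exact hq y q.end_mem_support
  have hHadj : ∀ y ∈ H, ∀ z, G.Adj y z → z ∉ p.support → z ∈ H := by
    rintro y ⟨q, hq⟩ z hyz hz
    refine ⟨q.concat hyz, fun s hs => ?_⟩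
    rw [Walk.support_concat] at hs
    rcases List.mem_append.1 hs with hs | hs
    · exact hq s hs
    · rw [List.mem_singleton] at hs
      exact hs ▸ hz
  have hHpath : ∀ y ∈ H, ∀ z ∈ H, ∃ P : G.Walk y z, ∀ a ∈ P.support, a ∉ p.support := by
    rintro y ⟨qy, hqy⟩ z ⟨qz, hqz⟩
    refine ⟨qy.reverse.append qz, fun a ha => ?_⟩
    rcases (Walk.mem_support_append_iff _ _).1 ha with h | h
    · exact hqy a (by rwa [Walk.support_reverse, List.mem_reverse] at h)
    · exact hqz a h
  -- the successor function on the cycle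
  obtain ⟨x0, e0, q0, hq0, hd0⟩ := aux_rotate_decomp hp p.start_mem_support
  have hdart : ∀ u, ∃ d : G.Dart, u ∈ p.support → (d ∈ p.darts ∧ d.fst = u) := by
    intro u
    by_cases hu : u ∈ p.support
    · obtain ⟨x, e, q, _, hd⟩ := aux_rotate_decomp hp hu
      exact ⟨⟨(u, x), e⟩, fun _ => ⟨hd, rfl⟩⟩
    · exact ⟨⟨(v, x0), e0⟩, fun h => absurd h hu⟩
  choose fd hfd using hdart
  have hfd1 : ∀ u, u ∈ p.support → fd u ∈ p.darts := fun u hu => (hfd u hu).1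
  have hfd2 : ∀ u, u ∈ p.support → (fd u).fst = u := fun u hu => (hfd u hu).2
  set f : V → V := fun u => (fd u).snd with hfdef
  have hfmem : ∀ u, u ∈ p.support → f u ∈ p.support :=
    fun u hu => p.dart_snd_mem_support_of_mem_darts (hfd1 u hu)
  have hfinj : ∀ u₁, u₁ ∈ p.support → ∀ u₂, u₂ ∈ p.support → f u₁ = f u₂ → u₁ = u₂ := by
    intro u₁ h₁ u₂ h₂ hff
    have := aux_dart_eq_of_snd_eq hp (hfd1 u₁ h₁) (hfd1 u₂ h₂) hff
    rw [← hfd2 u₁ h₁, ← hfd2 u₂ h₂, this]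
  have hfdecomp : ∀ u (hu : u ∈ p.support),
      ∃ (e : G.Adj u (f u)) (q : G.Walk (f u) u), p.rotate u hu = Walk.cons e q := by
    intro u hu
    obtain ⟨x, e, q, heq, hd⟩ := aux_rotate_decomp hp hu
    have hde : (⟨(u, x), e⟩ : G.Dart) = fd u :=
      aux_dart_eq_of_fst_eq hp hd (hfd1 u hu) (by rw [hfd2 u hu])
    have hx : x = f u := congrArg (fun d : G.Dart => d.snd) hde
    subst hx
    exact ⟨e, q, heq⟩
  -- the set of attachment vertices
  set S : Finset V := Finset.univ.filter (fun u => u ∈ p.support ∧ ∃ h ∈ H, G.Adj u h)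
    with hSdef
  have hSmem : ∀ u, u ∈ S ↔ (u ∈ p.support ∧ ∃ h ∈ H, G.Adj u h) := by
    intro u; simp [hSdef]
  have L1 : ∀ u ∈ S, f u ∉ S := by
    intro u huS hfuS
    obtain ⟨hu, h₁, hh₁, e₁⟩ := (hSmem u).1 huS
    obtain ⟨hfu, h₂, hh₂, e₂⟩ := (hSmem (f u)).1 hfuS
    obtain ⟨e, q, heq⟩ := hfdecomp u hu
    have hcyc : (Walk.cons e q).IsCycle := heq ▸ hp.rotate hu
    obtain ⟨P, hPav⟩ := hHpath h₁ hh₁ h₂ hh₂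
    have hPc : ∀ y ∈ P.support, y ∉ (Walk.cons e q).support := by
      intro y hy hyc
      rw [← heq] at hyc
      exact hPav y hy ((aux_mem_rotate_support hp hu).1 hyc)
    obtain ⟨c, hc, hlen⟩ := aux_surgery1 e q hcyc e₁ e₂ P hPc
    have hl2 : (Walk.cons e q).length = p.length := by rw [← heq, aux_length_rotate]
    have := hmax u c hc
    omega
  have L2 : ∀ u₁ ∈ S, ∀ u₂ ∈ S, u₁ ≠ u₂ → ¬ G.Adj (f u₁) (f u₂) := by
    intro u₁ h₁S u₂ h₂S hne hadj
    obtain ⟨hu₁, h₁, hh₁, e₁'⟩ := (hSmem u₁).1 h₁S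
    obtain ⟨hu₂, h₂, hh₂, e₂'⟩ := (hSmem u₂).1 h₂S
    obtain ⟨e₁, q, heq⟩ := hfdecomp u₁ hu₁
    have hu₂q : u₂ ∈ q.support := by
      have h0 : u₂ ∈ (p.rotate u₁ hu₁).support := (aux_mem_rotate_support hp hu₁).2 hu₂
      rw [heq, Walk.support_cons] at h0
      rcases List.mem_cons.1 h0 with h0 | h0
      · exact absurd h0.symm hne
      · exact h0
    have hspec : (q.takeUntil u₂ hu₂q).append (q.dropUntil u₂ hu₂q) = q := q.take_spec hu₂q
    obtain ⟨z, e₂, q3, hd2⟩ :=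
      Walk.not_nil_iff.1 (Walk.not_nil_of_ne (p := q.dropUntil u₂ hu₂q) hne.symm)
    have hdmem : (⟨(u₂, z), e₂⟩ : G.Dart) ∈ p.darts := by
      have hm1 : (⟨(u₂, z), e₂⟩ : G.Dart) ∈ (q.dropUntil u₂ hu₂q).darts := by
        rw [hd2, Walk.darts_cons]
        exact List.mem_cons_self
      have hm2 : (⟨(u₂, z), e₂⟩ : G.Dart) ∈ q.darts := by
        rw [← hspec, Walk.darts_append]
        exact List.mem_append_right _ hm1
      have hm3 : (⟨(u₂, z), e₂⟩ : G.Dart) ∈ (Walk.cons e₁ q).darts := by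
        rw [Walk.darts_cons]
        exact List.mem_cons_of_mem _ hm2
      rw [← heq] at hm3
      exact (Walk.rotate_darts p u₁ hu₁).perm.mem_iff.1 hm3
    have hz : z = f u₂ := by
      have hde : (⟨(u₂, z), e₂⟩ : G.Dart) = fd u₂ :=
        aux_dart_eq_of_fst_eq hp hdmem (hfd1 u₂ hu₂) (by rw [hfd2 u₂ hu₂])
      exact congrArg (fun d : G.Dart => d.snd) hde
    subst hz
    have hqeq : q = (q.takeUntil u₂ hu₂q).append (Walk.cons e₂ q3) := by
      rw [← hd2]; exact hspec.symm
    have heq2 : Walk.cons e₁ ((q.takeUntil u₂ hu₂q).append (Walk.cons e₂ q3)) = p.rotate u₁ hu₁ := by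
      rw [← hqeq]; exact heq.symm
    have hcyc2 : (Walk.cons e₁ ((q.takeUntil u₂ hu₂q).append (Walk.cons e₂ q3))).IsCycle :=
      heq2 ▸ hp.rotate hu₁
    obtain ⟨P, hPav⟩ := hHpath h₁ hh₁ h₂ hh₂
    have hPc : ∀ y ∈ P.support,
        y ∉ (Walk.cons e₁ ((q.takeUntil u₂ hu₂q).append (Walk.cons e₂ q3))).support := by
      intro y hy hyc
      rw [heq2] at hyc
      exact hPav y hy ((aux_mem_rotate_support hp hu₁).1 hyc)
    obtain ⟨c, hc, hlen⟩ := aux_surgery2 e₁ (q.takeUntil u₂ hu₂q) e₂ q3 hcyc2 hadj e₁' e₂' P hPc hne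
    have hWlen : (Walk.cons e₁ ((q.takeUntil u₂ hu₂q).append (Walk.cons e₂ q3))).length
        = p.length := by rw [heq2, aux_length_rotate]
    have := hmax u₁ c hc
    omega
  -- S is nonempty
  obtain ⟨qwv⟩ : G.Reachable w v := aux_tough_preconnected (by linarith) htough w v
  obtain ⟨y, z, hyz, hzC, r, hr⟩ := aux_walk_first_entry qwv (· ∈ p.support) hw p.start_mem_support
  have hyH : y ∈ H := ⟨r, hr⟩
  have hzS : z ∈ S := (hSmem z).2 ⟨hzC, y, hyH, hyz.symm⟩
  -- walks from w avoiding S stay in H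
  have havoid : ∀ (a b : V) (q : G.Walk a b), a ∈ H → (∀ s ∈ q.support, s ∉ S) → b ∈ H := by
    intro a b q
    induction q with
    | nil => exact fun ha _ => ha
    | @cons a c b e q' ih =>
      intro ha hs
      have hc : c ∈ H := by
        by_cases hcC : c ∈ p.support
        · exfalso
          have hcS : c ∈ S := (hSmem c).2 ⟨hcC, a, ha, e.symm⟩
          have hcsup : c ∈ (Walk.cons e q').support := by
            rw [Walk.support_cons]
            exact List.mem_cons_of_mem _ q'.start_mem_support
          exact hs c hcsup hcS
        · exact hHadj a ha c e hcC
      refine ih hc (fun s hsup => hs s ?_)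
      rw [Walk.support_cons]
      exact List.mem_cons_of_mem _ hsup
  -- toughness at S : |S| ≥ 2t
  have hfzC : f z ∈ p.support := hfmem z hzC
  have hfzS : f z ∉ S := L1 z hzS
  have h2S : 2 ≤ numComp G (S : Set V) := by
    refine aux_two_le_numComp (x := w) (y := f z) ?_ ?_ ?_
    · intro hwS
      exact hw ((hSmem w).1 (Finset.mem_coe.1 hwS)).1
    · intro hfS
      exact hfzS (Finset.mem_coe.1 hfS)
    · intro q
      by_contra hqq
      push_neg at hqq
      have : f z ∈ H :=
        havoid w (f z) q hwH (fun s hs hsS => hqq s hs (Finset.mem_coe.2 hsS))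
      exact hHC _ this hfzC
  have htS := htough S h2S
  have hScard : 2 * t ≤ (S.card : ℝ) := by
    have h4 : t * 2 ≤ t * (numComp G (S : Set V) : ℝ) :=
      mul_le_mul_of_nonneg_left (by exact_mod_cast h2S) (by linarith)
    linarith
  -- the independent set A
  set A : Finset V := S.image f ∪ {w} with hAdef
  have hwA : w ∉ S.image f := by
    intro hw'
    obtain ⟨u, huS, hfu⟩ := Finset.mem_image.1 hw'
    exact hw (hfu ▸ hfmem u ((hSmem u).1 huS).1)
  have hAcard : A.card = S.card + 1 := by
    rw [hAdef, Finset.card_union_of_disjoint (by simp [hwA]), Finset.card_singleton,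
      Finset.card_image_of_injOn
        (fun u hu u' hu' => hfinj u ((hSmem u).1 hu).1 u' ((hSmem u').1 hu').1)]
  have hAindep : ∀ x ∈ A, ∀ y ∈ A, ¬ G.Adj x y := by
    intro x hx y hy hadj
    rw [hAdef, Finset.mem_union] at hx hy
    rcases hx with hx | hx <;> rcases hy with hy | hy
    · obtain ⟨u₁, hu₁, rfl⟩ := Finset.mem_image.1 hx
      obtain ⟨u₂, hu₂, rfl⟩ := Finset.mem_image.1 hy
      have hne : u₁ ≠ u₂ := fun h => hadj.ne (by rw [h])
      exact L2 u₁ hu₁ u₂ hu₂ hne hadj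
    · obtain ⟨u, huS, rfl⟩ := Finset.mem_image.1 hx
      rw [Finset.mem_singleton] at hy
      subst hy
      have : f u ∈ S := (hSmem (f u)).2 ⟨hfmem u ((hSmem u).1 huS).1, y, hwH, hadj⟩
      exact L1 u huS this
    · obtain ⟨u, huS, rfl⟩ := Finset.mem_image.1 hy
      rw [Finset.mem_singleton] at hx
      subst hx
      have : f u ∈ S := (hSmem (f u)).2 ⟨hfmem u ((hSmem u).1 huS).1, x, hwH, hadj.symm⟩
      exact L1 u huS this
    · rw [Finset.mem_singleton] at hx hy
      subst hx; subst hy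
      exact hadj.ne rfl
  -- toughness at the complement of A
  have hnum : A.card ≤ numComp G ((Aᶜ : Finset V) : Set V) := by
    have h5 := aux_card_le_card_comp (G := G) hAindep
    have hrw : numComp G ((Aᶜ : Finset V) : Set V)
        = Nat.card (G.induce (↑A : Set V)).ConnectedComponent := by
      rw [numComp, Finset.coe_compl, compl_compl]
    omega
  have hA2 : (2 : ℕ) ≤ A.card := by
    rw [hAcard]
    have : 0 < S.card := Finset.card_pos.2 ⟨z, hzS⟩
    omega
  have htA := htough Aᶜ (le_trans hA2 hnum)
  have hcompl : ((Aᶜ : Finset V).card : ℝ) = (Fintype.card V : ℝ) - A.card := by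
    rw [Finset.card_compl]
    push_cast [Nat.cast_sub (Finset.card_le_univ A)]
    ring
  have h1 : t * (A.card : ℝ) ≤ (Fintype.card V : ℝ) - A.card := by
    have h6 : t * (A.card : ℝ) ≤ t * (numComp G ((Aᶜ : Finset V) : Set V) : ℝ) :=
      mul_le_mul_of_nonneg_left (by exact_mod_cast hnum) (by linarith)
    calc t * (A.card : ℝ) ≤ t * (numComp G ((Aᶜ : Finset V) : Set V) : ℝ) := h6
      _ ≤ ((Aᶜ : Finset V).card : ℝ) := htA
      _ = (Fintype.card V : ℝ) - A.card := hcompl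
  have hAge : (2 * t + 1 : ℝ) ≤ (A.card : ℝ) := by
    rw [hAcard]
    push_cast
    linarith
  nlinarith [h1, hAge, htt]
end
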